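/- Let β ≠ 0 and M ∈ ℝ, and consider the equilibrium point (0, 0, M) of the Rikitake vector field X_β. Then: (1) if |β| < |M|, the equilibrium (0, 0, M) is unstable (not Lyapunov stable); (2) if |β| > |M|, the equilibrium (0, 0, M) is Lyapunov stable. -/

import Mathlib

open Matrix

/-- Coordinate gradient of `f : ℝⁿ → ℝ` at `x`. -/
noncomputable def grad {n : ℕ} (f : (Fin n → ℝ) → ℝ) (x : Fin n → ℝ) : Fin n → ℝ :=
  fun i => fderiv ℝ f x (Pi.single i 1)

/-- Hessian matrix of `f : ℝⁿ → ℝ` at `x`. -/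
noncomputable def hess {n : ℕ} (f : (Fin n → ℝ) → ℝ) (x : Fin n → ℝ) :
    Matrix (Fin n) (Fin n) ℝ :=
  Matrix.of fun i j => fderiv ℝ (fun y => fderiv ℝ f y (Pi.single j 1)) x (Pi.single i 1)

/-- Jacobian matrix of a map `Φ : ℝⁿ → ℝⁿ` at `x`. -/
noncomputable def jac {n : ℕ} (Φ : (Fin n → ℝ) → (Fin n → ℝ)) (x : Fin n → ℝ) :
    Matrix (Fin n) (Fin n) ℝ :=
  Matrix.of fun i j => fderiv ℝ (fun y => Φ y i) x (Pi.single j 1)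

/-- The Rikitake vector field `X_β(x,y,z) = (yz + βy, xz − βx, −xy)`. -/
noncomputable def Riki (β : ℝ) (p : Fin 3 → ℝ) : Fin 3 → ℝ :=
  ![p 1 * p 2 + β * p 1, p 0 * p 2 - β * p 0, -(p 0 * p 1)]

/-- The first integral `I₁(x,y,z) = ½(x² + y²) + z²` of the Rikitake system. -/
noncomputable def rikiI1 (p : Fin 3 → ℝ) : ℝ :=
  (1 / 2) * ((p 0) ^ 2 + (p 1) ^ 2) + (p 2) ^ 2

/-- The first integral `I₂^β(x,y,z) = ¼(−x² + y²) − βz` of the Rikitake system. -/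
noncomputable def rikiI2 (β : ℝ) (p : Fin 3 → ℝ) : ℝ :=
  (1 / 4) * (-(p 0) ^ 2 + (p 1) ^ 2) - β * p 2

/-- Lyapunov stability of an equilibrium `p` of the vector field `X` on `ℝ³`. -/
def LyapunovStable3 (X : (Fin 3 → ℝ) → (Fin 3 → ℝ)) (p : Fin 3 → ℝ) : Prop :=
  ∀ U : Set (Fin 3 → ℝ), IsOpen U → p ∈ U →
    ∃ V : Set (Fin 3 → ℝ), V ⊆ U ∧ IsOpen V ∧ p ∈ V ∧
      ∀ f : ℝ → (Fin 3 → ℝ), f 0 ∈ V →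
        (∀ t : ℝ, 0 ≤ t → HasDerivWithinAt f (X (f t)) (Set.Ici 0) t) →
        ∀ t : ℝ, 0 ≤ t → f t ∈ U

section RikiAux

open Set Filter Metric

/-- Explicit homoclinic-type solution of the Rikitake system, as a function of `s = q(t)`. -/
noncomputable def rikiSol (k μ A s : ℝ) : Fin 3 → ℝ :=
  ![2*A*(s^3+s) / ((s^2+1)^2 - k^2*(s^2-1)^2),
    2*k*A*(s-s^3) / ((s^2+1)^2 - k^2*(s^2-1)^2),
    ((1-k^2)*μ*((s^2+1)^2 + k^2*(s^2-1)^2) - ((1+k^2)*μ/2)*((s^2+1)^2 - k^2*(s^2-1)^2))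
      / ((s^2+1)^2 - k^2*(s^2-1)^2)]

lemma rikiQ_pos {k : ℝ} (hk1 : k^2 < 1) (s : ℝ) : 0 < (s^2+1)^2 - k^2*(s^2-1)^2 := by
  have h1 : (s^2-1)^2 ≤ (s^2+1)^2 := by nlinarith [sq_nonneg s]
  have h2 : k^2*(s^2-1)^2 ≤ k^2*(s^2+1)^2 := mul_le_mul_of_nonneg_left h1 (sq_nonneg k)
  nlinarith [mul_pos (show (0:ℝ) < 1 - k^2 by linarith) (show (0:ℝ) < (s^2+1)^2 by positivity)]

lemma rikiSol_deriv (k μ A : ℝ) (hk1 : k^2 < 1) (hA : A^2 = 4*k^2*μ^2*(1-k^2))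
    {q : ℝ → ℝ} {t : ℝ} (hq : HasDerivAt q (k*μ*q t) t) :
    HasDerivAt (fun u => rikiSol k μ A (q u))
      (Riki ((1-k^2)*μ/2) (rikiSol k μ A (q t))) t := by
  have hQ0 : ((q t)^2+1)^2 - k^2*((q t)^2-1)^2 ≠ 0 := (rikiQ_pos hk1 (q t)).ne'
  -- derivative of the denominator
  have hQd : HasDerivAt (fun u => ((q u)^2+1)^2 - k^2*((q u)^2-1)^2)
      ((2:ℕ) * ((q t)^2+1)^(2-1) * ((2:ℕ) * (q t)^(2-1) * (k*μ*q t))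
        - k^2 * ((2:ℕ) * ((q t)^2-1)^(2-1) * ((2:ℕ) * (q t)^(2-1) * (k*μ*q t)))) t :=
    (((hq.pow 2).add_const 1).pow 2).sub ((((hq.pow 2).sub_const 1).pow 2).const_mul (k^2))
  have hPd : HasDerivAt (fun u => ((q u)^2+1)^2 + k^2*((q u)^2-1)^2)
      ((2:ℕ) * ((q t)^2+1)^(2-1) * ((2:ℕ) * (q t)^(2-1) * (k*μ*q t))
        + k^2 * ((2:ℕ) * ((q t)^2-1)^(2-1) * ((2:ℕ) * (q t)^(2-1) * (k*μ*q t)))) t :=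
    (((hq.pow 2).add_const 1).pow 2).add ((((hq.pow 2).sub_const 1).pow 2).const_mul (k^2))
  have hNx : HasDerivAt (fun u => 2*A*((q u)^3 + q u))
      (2*A*((3:ℕ) * (q t)^(3-1) * (k*μ*q t) + k*μ*q t)) t :=
    ((hq.pow 3).add hq).const_mul (2*A)
  have hNy : HasDerivAt (fun u => 2*k*A*(q u - (q u)^3))
      (2*k*A*(k*μ*q t - (3:ℕ) * (q t)^(3-1) * (k*μ*q t))) t :=
    (hq.sub (hq.pow 3)).const_mul (2*k*A)
  have hNz : HasDerivAt
      (fun u => (1-k^2)*μ*(((q u)^2+1)^2 + k^2*((q u)^2-1)^2)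
        - ((1+k^2)*μ/2)*(((q u)^2+1)^2 - k^2*((q u)^2-1)^2))
      ((1-k^2)*μ*((2:ℕ) * ((q t)^2+1)^(2-1) * ((2:ℕ) * (q t)^(2-1) * (k*μ*q t))
          + k^2 * ((2:ℕ) * ((q t)^2-1)^(2-1) * ((2:ℕ) * (q t)^(2-1) * (k*μ*q t))))
        - ((1+k^2)*μ/2)*((2:ℕ) * ((q t)^2+1)^(2-1) * ((2:ℕ) * (q t)^(2-1) * (k*μ*q t))
          - k^2 * ((2:ℕ) * ((q t)^2-1)^(2-1) * ((2:ℕ) * (q t)^(2-1) * (k*μ*q t))))) t :=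
    (hPd.const_mul ((1-k^2)*μ)).sub (hQd.const_mul ((1+k^2)*μ/2))
  have hx := hNx.div hQd hQ0
  have hy := hNy.div hQd hQ0
  have hz := hNz.div hQd hQ0
  refine hasDerivAt_pi.mpr fun i => ?_
  fin_cases i
  · exact hx.congr_deriv (by
      simp only [Riki, rikiSol, Matrix.cons_val_zero, Matrix.cons_val_one, Matrix.head_cons,
        Matrix.cons_val_two, Matrix.tail_cons]
      push_cast
      field_simp
      ring)
  · exact hy.congr_deriv (by
      simp only [Riki, rikiSol, Matrix.cons_val_zero, Matrix.cons_val_one, Matrix.head_cons,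
        Matrix.cons_val_two, Matrix.tail_cons]
      push_cast
      field_simp
      ring)
  · exact hz.congr_deriv (by
      simp only [Riki, rikiSol, Matrix.cons_val_zero, Matrix.cons_val_one, Matrix.head_cons,
        Matrix.cons_val_two, Matrix.tail_cons]
      push_cast
      field_simp
      ring_nf
      rw [hA]
      ring)


/-- Constancy from zero right-derivative on `[0,∞)`. -/
lemma const_along {g : ℝ → ℝ} (hg : ∀ s, 0 ≤ s → HasDerivWithinAt g 0 (Set.Ici 0) s)
    {t : ℝ} (ht : 0 ≤ t) : g t = g 0 := by
  refine constant_of_has_deriv_right_zero (f := g) (a := 0) (b := t)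
    (fun s hs => ((hg s hs.1).continuousWithinAt).mono (Icc_subset_Ici_self))
    (fun s hs => (hg s hs.1).mono (Set.Ici_subset_Ici.mpr hs.1)) t
    (Set.right_mem_Icc.mpr ht)

lemma riki_I1_const (β : ℝ) {f : ℝ → Fin 3 → ℝ}
    (hf : ∀ t, 0 ≤ t → HasDerivWithinAt f (Riki β (f t)) (Set.Ici 0) t)
    {t : ℝ} (ht : 0 ≤ t) : rikiI1 (f t) = rikiI1 (f 0) := by
  refine const_along (g := fun u => rikiI1 (f u)) (fun s hs => ?_) ht
  have hp := hasDerivWithinAt_pi.mp (hf s hs)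
  have hb := ((((hp 0).pow 2).add ((hp 1).pow 2)).const_mul ((1:ℝ)/2)).add ((hp 2).pow 2)
  refine hb.congr_deriv ?_
  simp [Riki]
  ring


lemma riki_I2_const (β : ℝ) {f : ℝ → Fin 3 → ℝ}
    (hf : ∀ t, 0 ≤ t → HasDerivWithinAt f (Riki β (f t)) (Set.Ici 0) t)
    {t : ℝ} (ht : 0 ≤ t) : rikiI2 β (f t) = rikiI2 β (f 0) := by
  refine const_along (g := fun u => rikiI2 β (f u)) (fun s hs => ?_) ht
  have hp := hasDerivWithinAt_pi.mp (hf s hs)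
  have hb := ((((hp 0).pow 2).neg.add ((hp 1).pow 2)).const_mul ((1:ℝ)/4)).sub
    ((hp 2).const_mul β)
  refine hb.congr_deriv ?_
  simp [Riki]
  ring


lemma riki_isolation (β M : ℝ) (hβM : |M| < |β|) (p : Fin 3 → ℝ)
    (hd : dist p ![0,0,M] ≤ |β| - |M|)
    (h1 : rikiI1 p = M^2) (h2 : rikiI2 β p = -(β*M)) : p = ![0,0,M] := by
  have hβ0 : β ≠ 0 := by
    intro h; rw [h] at hβM; simp at hβM; exact absurd hβM (abs_nonneg M).not_gt
  have hz : |p 2 - M| ≤ |β| - |M| := by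
    have := (dist_le_pi_dist p ![0,0,M] 2).trans hd
    simpa [Real.dist_eq] using this
  have hz1 := (abs_le.mp hz).1
  have hz2 := (abs_le.mp hz).2
  rw [rikiI1] at h1
  rw [rikiI2] at h2
  set x := p 0
  set y := p 1
  set z := p 2
  have key : x^2*(2*β-M-z) + y^2*(2*β+M+z) = 0 := by
    linear_combination 4*β*h1 + 4*(M+z)*h2
  have hM1 := le_abs_self M
  have hM2 := neg_abs_le M
  have hx : x = 0 ∧ y = 0 := by
    rcases lt_or_gt_of_ne hβ0 with hb | hb
    · have hab : |β| = -β := abs_of_neg hb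
      have hc1 : 2*β-M-z < 0 := by linarith
      have hc2 : 2*β+M+z < 0 := by linarith
      constructor
      · have : x^2 = 0 := le_antisymm (by nlinarith [sq_nonneg y, sq_nonneg x]) (sq_nonneg x)
        exact (pow_eq_zero_iff two_ne_zero).mp this
      · have : y^2 = 0 := le_antisymm (by nlinarith [sq_nonneg y, sq_nonneg x]) (sq_nonneg y)
        exact (pow_eq_zero_iff two_ne_zero).mp this
    · have hab : |β| = β := abs_of_pos hb
      have hc1 : 0 < 2*β-M-z := by linarith
      have hc2 : 0 < 2*β+M+z := by linarith
      constructor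
      · have : x^2 = 0 := le_antisymm (by nlinarith [sq_nonneg y, sq_nonneg x]) (sq_nonneg x)
        exact (pow_eq_zero_iff two_ne_zero).mp this
      · have : y^2 = 0 := le_antisymm (by nlinarith [sq_nonneg y, sq_nonneg x]) (sq_nonneg y)
        exact (pow_eq_zero_iff two_ne_zero).mp this
  obtain ⟨hx0, hy0⟩ := hx
  have hzM : z = M := by
    have : β * z = β * M := by rw [hx0, hy0] at h2; linarith [h2]
    exact mul_left_cancel₀ hβ0 this
  funext i
  fin_cases i
  · simpa using hx0
  · simpa using hy0
  · simpa using hzM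


lemma riki_stable (β M : ℝ) (h : |M| < |β|) : LyapunovStable3 (Riki β) ![0,0,M] := by
  have hI1cont : Continuous rikiI1 := by
    unfold rikiI1; fun_prop
  have hI2cont : Continuous (rikiI2 β) := by
    unfold rikiI2; fun_prop
  set p₀ : Fin 3 → ℝ := ![0,0,M] with hp₀def
  have hI1p₀ : rikiI1 p₀ = M^2 := by simp [rikiI1, hp₀def]
  have hI2p₀ : rikiI2 β p₀ = -(β*M) := by simp [rikiI2, hp₀def]
  set Vf : (Fin 3 → ℝ) → ℝ := fun p => (rikiI1 p - M^2)^2 + (rikiI2 β p - -(β*M))^2 with hVfdef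
  have hVfcont : Continuous Vf := by fun_prop
  have hVfnonneg : ∀ p, 0 ≤ Vf p := fun p => by positivity
  have hVfzero : ∀ p, Vf p = 0 → rikiI1 p = M^2 ∧ rikiI2 β p = -(β*M) := by
    intro p hp
    have hp' : (rikiI1 p - M^2)^2 + (rikiI2 β p - -(β*M))^2 = 0 := hp
    have q1 : (rikiI1 p - M^2)^2 = 0 :=
      le_antisymm (by nlinarith [sq_nonneg (rikiI2 β p - -(β*M))]) (sq_nonneg _)
    have q2 : (rikiI2 β p - -(β*M))^2 = 0 :=
      le_antisymm (by nlinarith [sq_nonneg (rikiI1 p - M^2)]) (sq_nonneg _)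
    have e1 := (pow_eq_zero_iff two_ne_zero).mp q1
    have e2 := (pow_eq_zero_iff two_ne_zero).mp q2
    constructor <;> linarith
  intro U hU hpU
  obtain ⟨ε, hε, hballU⟩ := Metric.isOpen_iff.mp hU p₀ hpU
  have hr : 0 < |β| - |M| := by linarith
  set ρ := min (ε/2) (|β| - |M|) with hρdef
  have hρ : 0 < ρ := lt_min (by linarith) hr
  have hρr : ρ ≤ |β| - |M| := min_le_right _ _
  have hballsub : Metric.ball p₀ ρ ⊆ U :=
    (Metric.ball_subset_ball (by linarith [min_le_left (ε/2) (|β| - |M|)])).trans hballU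
  -- minimum of Vf on the sphere
  obtain ⟨pm, hpmS, hpmmin⟩ := (isCompact_sphere p₀ ρ).exists_isMinOn
    (NormedSpace.sphere_nonempty.mpr hρ.le) hVfcont.continuousOn
  have hm : 0 < Vf pm := by
    rcases (hVfnonneg pm).lt_or_eq with h' | h'
    · exact h'
    · exfalso
      obtain ⟨e1, e2⟩ := hVfzero pm h'.symm
      have hdist : dist pm p₀ = ρ := Metric.mem_sphere.mp hpmS
      have := riki_isolation β M h pm (by rw [hdist]; exact hρr) e1 e2
      rw [this, dist_self] at hdist
      exact absurd hdist hρ.ne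
  refine ⟨Metric.ball p₀ ρ ∩ Vf ⁻¹' (Set.Iio (Vf pm)), fun q hq => hballsub hq.1,
    Metric.isOpen_ball.inter (isOpen_Iio.preimage hVfcont), ⟨Metric.mem_ball_self hρ, ?_⟩, ?_⟩
  · have : Vf p₀ = 0 := by rw [hVfdef]; simp [hI1p₀, hI2p₀]
    simpa [this] using hm
  · intro f hf0 hfd t ht
    have hcons : ∀ s, 0 ≤ s → Vf (f s) = Vf (f 0) := by
      intro s hs
      rw [hVfdef]
      simp only
      rw [riki_I1_const β hfd hs, riki_I2_const β hfd hs]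
    have hVlt : ∀ s, 0 ≤ s → Vf (f s) < Vf pm := by
      intro s hs
      rw [hcons s hs]
      exact hf0.2
    have hfc : ContinuousOn f (Set.Icc 0 t) :=
      fun s hs => ((hfd s hs.1).continuousWithinAt).mono Icc_subset_Ici_self
    have hφc : ContinuousOn (fun s => dist (f s) p₀) (Set.Icc 0 t) :=
      (continuous_id.dist continuous_const).comp_continuousOn hfc
    have hne : ∀ s ∈ Set.Icc (0:ℝ) t, dist (f s) p₀ ≠ ρ := by
      intro s hs hcontra
      have hfsS : f s ∈ Metric.sphere p₀ ρ := Metric.mem_sphere.mpr hcontra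
      have := hpmmin hfsS
      exact absurd this (not_le.mpr (hVlt s hs.1))
    have hft : dist (f t) p₀ < ρ := by
      by_contra hcon
      push_neg at hcon
      have h0 : dist (f 0) p₀ < ρ := by simpa [Metric.mem_ball] using hf0.1
      have hsub := intermediate_value_Icc ht hφc
      have : ρ ∈ Set.Icc (dist (f 0) p₀) (dist (f t) p₀) := ⟨h0.le, hcon⟩
      obtain ⟨s, hsI, hs⟩ := hsub this
      exact hne s hsI hs
    exact hballsub (Metric.mem_ball.mpr hft)


lemma riki_unstable_core (k μ : ℝ) (hk0 : 0 < k) (hk1 : k < 1) (hμ : 0 < μ) :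
    ¬ LyapunovStable3 (Riki ((1-k^2)*μ/2)) ![0, 0, (1+k^2)*μ/2] := by
  intro hst
  have hk2 : k^2 < 1 := by nlinarith
  have h1k : (0:ℝ) ≤ 1 - k^2 := by linarith
  set A : ℝ := 2*k*μ*Real.sqrt (1-k^2) with hAdef
  have hA : A^2 = 4*k^2*μ^2*(1-k^2) := by
    rw [hAdef, mul_pow, mul_pow, mul_pow, Real.sq_sqrt h1k]; ring
  set M : ℝ := (1+k^2)*μ/2 with hMdef
  obtain ⟨W, hWU, hWopen, hpW, hWtraj⟩ := hst (Metric.ball ![0,0,M] (k^2*μ))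
    Metric.isOpen_ball (Metric.mem_ball_self (by positivity))
  -- the solution value as a function of q, continuous at q = 0
  have hGcont : ContinuousAt (rikiSol k μ A) 0 := by
    have hQ0 : ((0:ℝ)^2+1)^2 - k^2*((0:ℝ)^2-1)^2 ≠ 0 := (rikiQ_pos hk2 0).ne'
    refine continuousAt_pi.mpr fun i => ?_
    fin_cases i <;>
      simp only [rikiSol, Matrix.cons_val_zero, Matrix.cons_val_one, Matrix.head_cons,
        Matrix.cons_val_two, Matrix.tail_cons] <;>
      exact ContinuousAt.div (by fun_prop) (by fun_prop) hQ0
  have hG0 : rikiSol k μ A 0 = ![0, 0, M] := by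
    have h0 : ((0:ℝ)^2+1)^2 - k^2*((0:ℝ)^2-1)^2 = 1 - k^2 := by ring
    have hne : (1:ℝ) - k^2 ≠ 0 := by nlinarith
    funext i
    fin_cases i <;>
      simp only [rikiSol, Matrix.cons_val_zero, Matrix.cons_val_one, Matrix.head_cons,
        Matrix.cons_val_two, Matrix.tail_cons, Fin.reduceFinMk, Matrix.cons_val] <;>
      simp only [hMdef, h0] <;> field_simp <;> ring
  have hlim : Tendsto (fun c : ℝ => rikiSol k μ A (Real.exp (-c))) atTop (nhds ![0,0,M]) := by
    rw [← hG0]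
    exact hGcont.tendsto.comp Real.tendsto_exp_neg_atTop_nhds_zero
  obtain ⟨c, hcW, hc1⟩ := ((hlim.eventually (hWopen.mem_nhds hpW)).and
    (eventually_ge_atTop (1:ℝ))).exists
  -- the trajectory
  set f : ℝ → Fin 3 → ℝ := fun u => rikiSol k μ A (Real.exp (k*μ*u - c)) with hfdef
  have hq : ∀ u : ℝ, HasDerivAt (fun v => Real.exp (k*μ*v - c))
      (k*μ*Real.exp (k*μ*u - c)) u := by
    intro u
    have h : HasDerivAt (fun v : ℝ => k*μ*v - c) (k*μ*1) u :=
      ((hasDerivAt_id u).const_mul (k*μ)).sub_const c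
    have := h.exp
    convert this using 1
    ring
  have hfd : ∀ u : ℝ, 0 ≤ u → HasDerivWithinAt f (Riki ((1-k^2)*μ/2) (f u)) (Set.Ici 0) u :=
    fun u _ => (rikiSol_deriv k μ A hk2 hA (hq u)).hasDerivWithinAt
  have hf0 : f 0 ∈ W := by
    have : k*μ*0 - c = -c := by ring
    rw [hfdef]; simp only [this]; exact hcW
  have hkμ : (0:ℝ) < k*μ := by positivity
  have htstar : (0:ℝ) ≤ c/(k*μ) := by positivity
  have hmem := hWtraj f hf0 hfd (c/(k*μ)) htstar
  have hq1 : Real.exp (k*μ*(c/(k*μ)) - c) = 1 := by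
    rw [mul_div_cancel₀ _ hkμ.ne']; simp
  have hfz : f (c/(k*μ)) 2 = M - 2*k^2*μ := by
    rw [hfdef]
    simp only [hq1, rikiSol, Matrix.cons_val_two, Matrix.tail_cons, Matrix.head_cons]
    rw [hMdef]
    norm_num
    ring
  have hball := hmem
  rw [Metric.mem_ball] at hball
  have hcomp := (dist_le_pi_dist (f (c/(k*μ))) ![0,0,M] 2).trans_lt hball
  rw [hfz] at hcomp
  have : (![0,0,M] : Fin 3 → ℝ) 2 = M := by simp
  rw [this, Real.dist_eq] at hcomp
  rw [show M - 2*k^2*μ - M = -(2*k^2*μ) by ring, abs_neg, abs_of_pos (by positivity)] at hcomp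
  nlinarith


lemma stable_transfer {X X' : (Fin 3 → ℝ) → Fin 3 → ℝ} {σ : (Fin 3 → ℝ) → (Fin 3 → ℝ)}
    (hσcont : Continuous σ) (hσσ : ∀ p, σ (σ p) = p)
    (hder : ∀ (f : ℝ → Fin 3 → ℝ) (v : Fin 3 → ℝ) (t : ℝ),
      HasDerivWithinAt f v (Set.Ici 0) t → HasDerivWithinAt (fun u => σ (f u)) (σ v) (Set.Ici 0) t)
    (hcomm : ∀ p, X (σ p) = σ (X' p)) {p : Fin 3 → ℝ}
    (h : LyapunovStable3 X p) : LyapunovStable3 X' (σ p) := by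
  intro U hU hpU
  obtain ⟨V, hVU, hVopen, hpV, htraj⟩ := h (σ ⁻¹' U) (hU.preimage hσcont)
    (by simp only [Set.mem_preimage, hσσ]; exact hpU)
  refine ⟨σ ⁻¹' V, ?_, hVopen.preimage hσcont, ?_, ?_⟩
  · intro q hq
    have := hVU hq
    simpa only [Set.mem_preimage, hσσ] using this
  · simp only [Set.mem_preimage, hσσ]; exact hpV
  · intro f hf0 hfd t ht
    have hgd : ∀ s : ℝ, 0 ≤ s →
        HasDerivWithinAt (fun u => σ (f u)) (X (σ (f s))) (Set.Ici 0) s := by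
      intro s hs
      have := hder f (X' (f s)) s (hfd s hs)
      rwa [← hcomm (f s)] at this
    have := htraj (fun u => σ (f u)) hf0 hgd t ht
    simpa only [Set.mem_preimage, hσσ] using this

lemma riki_swap (β M : ℝ) (h : LyapunovStable3 (Riki β) ![0,0,M]) :
    LyapunovStable3 (Riki (-β)) ![0,0,M] := by
  have key := stable_transfer (X := Riki β) (X' := Riki (-β))
    (σ := fun p => ![p 1, p 0, p 2])
    (by refine continuous_pi fun i => ?_
        fin_cases i <;> simp <;> exact continuous_apply _)
    (fun p => by funext i; fin_cases i <;> simp)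
    (fun f v t hf => by
      have hp := hasDerivWithinAt_pi.mp hf
      refine hasDerivWithinAt_pi.mpr fun i => ?_
      fin_cases i <;> simpa using hp _)
    (fun p => by funext i; fin_cases i <;> simp [Riki] <;> ring) h
  have h2 : ((fun p : Fin 3 → ℝ => ![p 1, p 0, p 2]) ![0,0,M]) = ![(0:ℝ),0,M] := by
    funext i; fin_cases i <;> simp
  exact cast (congrArg (LyapunovStable3 (Riki (-β))) h2) key

lemma riki_flip (β M : ℝ) (h : LyapunovStable3 (Riki β) ![0,0,M]) :
    LyapunovStable3 (Riki (-β)) ![0,0,-M] := by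
  have key := stable_transfer (X := Riki β) (X' := Riki (-β))
    (σ := fun p => ![p 0, -(p 1), -(p 2)])
    (by refine continuous_pi fun i => ?_
        fin_cases i <;> simp <;>
          first
          | exact continuous_apply _
          | exact (continuous_apply _).neg)
    (fun p => by funext i; fin_cases i <;> simp)
    (fun f v t hf => by
      have hp := hasDerivWithinAt_pi.mp hf
      refine hasDerivWithinAt_pi.mpr fun i => ?_
      fin_cases i
      · simpa using hp 0
      · simpa using (hp 1).fun_neg
      · simpa using (hp 2).fun_neg)
    (fun p => by funext i; fin_cases i <;> simp [Riki] <;> ring) h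
  have h2 : ((fun p : Fin 3 → ℝ => ![p 0, -(p 1), -(p 2)]) ![0,0,M]) = ![(0:ℝ),0,-M] := by
    funext i; fin_cases i <;> simp
  exact cast (congrArg (LyapunovStable3 (Riki (-β))) h2) key

lemma riki_unstable_pos (β M : ℝ) (h0 : 0 < β) (h1 : β < M) :
    ¬ LyapunovStable3 (Riki β) ![0,0,M] := by
  have hμ : 0 < M + β := by linarith
  set k : ℝ := Real.sqrt ((M-β)/(M+β)) with hkdef
  have hk2 : k^2 = (M-β)/(M+β) := Real.sq_sqrt (div_nonneg (by linarith) (by linarith))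
  have hk0 : 0 < k := Real.sqrt_pos.mpr (div_pos (by linarith) hμ)
  have hlt : (M-β)/(M+β) < 1 := (div_lt_one hμ).mpr (by linarith)
  have hk1 : k < 1 := by
    by_contra hcon
    push_neg at hcon
    nlinarith [hk2, hlt]
  have hβeq : (1-k^2)*(M+β)/2 = β := by
    rw [hk2]; field_simp; ring
  have hMeq : (1+k^2)*(M+β)/2 = M := by
    rw [hk2]; field_simp; ring
  have h := riki_unstable_core k (M+β) hk0 hk1 hμ
  rwa [hβeq, hMeq] at h

end RikiAux

/-- Stability of the equilibria `(0,0,M)` of the Rikitake system: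
unstable if `|β| < |M|`, Lyapunov stable if `|β| > |M|`. -/
theorem rikitake_stability (β M : ℝ) (hβ : β ≠ 0) :
    (|β| < |M| → ¬ LyapunovStable3 (Riki β) ![0, 0, M]) ∧
    (|M| < |β| → LyapunovStable3 (Riki β) ![0, 0, M]) := by
  constructor
  · intro h hst
    rcases lt_trichotomy M 0 with hM | hM | hM
    · have h2 := riki_flip β M hst
      rcases lt_trichotomy β 0 with hb | hb | hb
      · exact riki_unstable_pos (-β) (-M) (by linarith)
          (by rw [abs_of_neg hb, abs_of_neg hM] at h; linarith) h2
      · exact hβ hb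
      · have h3 := riki_swap (-β) (-M) h2
        rw [neg_neg] at h3
        exact riki_unstable_pos β (-M) hb
          (by rw [abs_of_pos hb, abs_of_neg hM] at h; linarith) h3
    · subst hM; simp at h; exact absurd h (abs_nonneg β).not_gt
    · rcases lt_trichotomy β 0 with hb | hb | hb
      · have h2 := riki_swap β M hst
        exact riki_unstable_pos (-β) M (by linarith)
          (by rw [abs_of_neg hb, abs_of_pos hM] at h; linarith) h2
      · exact hβ hb
      · exact riki_unstable_pos β M hb
          (by rw [abs_of_pos hb, abs_of_pos hM] at h; linarith) hst
  · exact riki_stable β M
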